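/- For 1 ≤ p < ∞ and any integer N ≥ p, the space ℓ_p is P_N-Schur: if (x_n) is a sequence in ℓ_p such that Q(x_n) → 0 for every homogeneous polynomial Q on ℓ_p of degree at most N, then ‖x_n‖_p → 0. -/

import Mathlib

open Filter Topology

namespace LpPNS


/-- If partial sums of a nonnegative sequence are bounded by `S`, then for `r ≥ 1`
the sequence of `r`-th powers is summable with sum at most `S ^ r`. -/
theorem tsum_rpow_le {f : ℕ → ℝ} (hf : ∀ k, 0 ≤ f k) {S : ℝ}
    (hS : ∀ K, ∑ k ∈ Finset.range K, f k ≤ S) {r : ℝ} (hr : 1 ≤ r) :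
    Summable (fun k => f k ^ r) ∧ ∑' k, f k ^ r ≤ S ^ r := by
  have hS0 : 0 ≤ S := le_trans (by simp) (hS 0)
  have hfS : ∀ k, f k ≤ S := fun k =>
    le_trans (Finset.single_le_sum (fun i _ => hf i) (Finset.self_mem_range_succ k)) (hS (k + 1))
  have hr0 : 0 < r := lt_of_lt_of_le one_pos hr
  have key : ∀ k, f k ^ r ≤ S ^ (r - 1) * f k := by
    intro k
    rcases eq_or_lt_of_le (hf k) with h0 | h0
    · rw [← h0, Real.zero_rpow hr0.ne', mul_zero]
    · have h1 : f k ^ r = f k ^ (r - 1) * f k := by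
        rw [← Real.rpow_add_one h0.ne' (r - 1), sub_add_cancel]
      rw [h1]
      exact mul_le_mul_of_nonneg_right (Real.rpow_le_rpow (hf k) (hfS k) (by linarith)) (hf k)
  have hSr : S ^ (r - 1) * S = S ^ r := by
    rcases eq_or_lt_of_le hS0 with h | h
    · rw [← h, mul_zero, Real.zero_rpow hr0.ne']
    · rw [← Real.rpow_add_one h.ne' (r - 1), sub_add_cancel]
  have hpart : ∀ K, ∑ k ∈ Finset.range K, f k ^ r ≤ S ^ r := by
    intro K
    calc ∑ k ∈ Finset.range K, f k ^ r ≤ ∑ k ∈ Finset.range K, S ^ (r - 1) * f k :=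
          Finset.sum_le_sum fun k _ => key k
      _ = S ^ (r - 1) * ∑ k ∈ Finset.range K, f k := by rw [Finset.mul_sum]
      _ ≤ S ^ (r - 1) * S :=
          mul_le_mul_of_nonneg_left (hS K) (Real.rpow_nonneg hS0 _)
      _ = S ^ r := hSr
  exact ⟨summable_of_sum_range_le (fun k => Real.rpow_nonneg (hf k) r) hpart,
    Real.tsum_le_of_sum_range_le (fun k => Real.rpow_nonneg (hf k) r) hpart⟩

/-- AM-GM in the form needed: a product of `N` nonnegative reals is at most
`N⁻¹` times the sum of their `N`-th powers. -/
theorem amgm {N : ℕ} (hN : 1 ≤ N) (a : Fin N → ℝ) (ha : ∀ j, 0 ≤ a j) :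
    ∏ j, a j ≤ (N : ℝ)⁻¹ * ∑ j, a j ^ N := by
  have hN0 : (N : ℝ) ≠ 0 := Nat.cast_ne_zero.2 (by omega)
  have h := Real.geom_mean_le_arith_mean_weighted Finset.univ (fun _ => (N : ℝ)⁻¹)
      (fun j => a j ^ N) (fun _ _ => inv_nonneg.2 (Nat.cast_nonneg N))
      (by
        simp only [Finset.sum_const, Finset.card_univ, Fintype.card_fin, nsmul_eq_mul]
        exact mul_inv_cancel₀ hN0)
      (fun j _ => pow_nonneg (ha j) N)
  calc ∏ j, a j = ∏ j, (a j ^ N) ^ ((N : ℝ)⁻¹) := by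
        refine Finset.prod_congr rfl fun j _ => ?_
        rw [← Real.rpow_natCast (a j) N, ← Real.rpow_mul (ha j), mul_inv_cancel₀ hN0,
          Real.rpow_one]
    _ ≤ ∑ j, (N : ℝ)⁻¹ * a j ^ N := h
    _ = (N : ℝ)⁻¹ * ∑ j, a j ^ N := by rw [Finset.mul_sum]

/-- Sum over consecutive blocks. -/
theorem sum_blocks (m : ℕ → ℕ) (hm : Monotone m) (f : ℕ → ℝ) :
    ∀ a b : ℕ, a ≤ b →
      ∑ ℓ ∈ Finset.Ico a b, (∑ i ∈ Finset.Ico (m ℓ) (m (ℓ + 1)), f i)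
        = ∑ i ∈ Finset.Ico (m a) (m b), f i := by
  intro a b hab
  induction b, hab using Nat.le_induction with
  | base => simp
  | succ b hab ih =>
      rw [Finset.sum_Ico_succ_top hab, ih,
        Finset.sum_Ico_consecutive _ (hm hab) (hm (Nat.le_succ b))]

section Diag

variable {X : Type*} [NormedAddCommGroup X] [NormedSpace ℂ X]
variable {N : ℕ} (φ : ℕ → X →ₗ[ℂ] ℂ)

theorem prod_norm_bound (hN : 1 ≤ N) (y : Fin N → X) (k : ℕ) :
    ‖∏ j, φ k (y j)‖ ≤ (N : ℝ)⁻¹ * ∑ j, ‖φ k (y j)‖ ^ N := by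
  rw [norm_prod]
  exact amgm hN _ fun j => norm_nonneg _

theorem summable_diag_norm (hN : 1 ≤ N)
    (hsum : ∀ y : X, Summable fun k => ‖φ k y‖ ^ N) (y : Fin N → X) :
    Summable fun k => ‖∏ j, φ k (y j)‖ :=
  Summable.of_nonneg_of_le (fun _ => norm_nonneg _) (prod_norm_bound φ hN y)
    ((summable_sum fun j _ => hsum (y j)).mul_left _)

theorem summable_diag (hN : 1 ≤ N)
    (hsum : ∀ y : X, Summable fun k => ‖φ k y‖ ^ N) (y : Fin N → X) :
    Summable fun k => ∏ j, φ k (y j) :=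
  Summable.of_norm (summable_diag_norm φ hN hsum y)

/-- The diagonal multilinear map `y ↦ ∑' k, ∏ j, φ k (y j)`. -/
noncomputable def diagML (hN : 1 ≤ N)
    (hsum : ∀ y : X, Summable fun k => ‖φ k y‖ ^ N) :
    MultilinearMap ℂ (fun _ : Fin N => X) ℂ where
  toFun y := ∑' k, ∏ j, φ k (y j)
  map_update_add' := by
    intro dec y j a b
    have hupd : ∀ (v : X) (k : ℕ),
        (∏ j', φ k (Function.update y j v j'))
          = φ k v * ∏ j' ∈ Finset.univ \ {j}, φ k (y j') := by
      intro v k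
      calc (∏ j', φ k (Function.update y j v j'))
          = ∏ j', Function.update (fun j' => φ k (y j')) j (φ k v) j' :=
            Finset.prod_congr rfl fun j' _ => by
              rw [Function.apply_update (fun _ z => φ k z) y j v j']
        _ = φ k v * ∏ j' ∈ Finset.univ \ {j}, φ k (y j') :=
            Finset.prod_update_of_mem (Finset.mem_univ j) _ _
    simp only [hupd, map_add, add_mul]
    exact Summable.tsum_add
      ((summable_diag φ hN hsum (Function.update y j a)).congr fun k => hupd a k)
      ((summable_diag φ hN hsum (Function.update y j b)).congr fun k => hupd b k)
  map_update_smul' := by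
    intro dec y j c a
    have hupd : ∀ (v : X) (k : ℕ),
        (∏ j', φ k (Function.update y j v j'))
          = φ k v * ∏ j' ∈ Finset.univ \ {j}, φ k (y j') := by
      intro v k
      calc (∏ j', φ k (Function.update y j v j'))
          = ∏ j', Function.update (fun j' => φ k (y j')) j (φ k v) j' :=
            Finset.prod_congr rfl fun j' _ => by
              rw [Function.apply_update (fun _ z => φ k z) y j v j']
        _ = φ k v * ∏ j' ∈ Finset.univ \ {j}, φ k (y j') :=
            Finset.prod_update_of_mem (Finset.mem_univ j) _ _
    simp only [hupd, map_smul, smul_eq_mul, mul_assoc]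
    exact tsum_mul_left

theorem diagML_apply (hN : 1 ≤ N) (hsum : ∀ y : X, Summable fun k => ‖φ k y‖ ^ N)
    (y : Fin N → X) : diagML φ hN hsum y = ∑' k, ∏ j, φ k (y j) := rfl

theorem diagML_bound (hN : 1 ≤ N) (hsum : ∀ y : X, Summable fun k => ‖φ k y‖ ^ N)
    (hle : ∀ y : X, ∑' k, ‖φ k y‖ ^ N ≤ ‖y‖ ^ N) (y : Fin N → X) :
    ‖∑' k, ∏ j, φ k (y j)‖ ≤ ∏ j, ‖y j‖ := by
  have hN0 : (N : ℝ) ≠ 0 := Nat.cast_ne_zero.2 (by omega)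
  by_cases hz : ∀ j, y j ≠ 0
  · have hnorm1 : ∀ u : Fin N → X, (∀ j, ‖u j‖ ≤ 1) → ‖∑' k, ∏ j, φ k (u j)‖ ≤ 1 := by
      intro u hu
      calc ‖∑' k, ∏ j, φ k (u j)‖ ≤ ∑' k, ‖∏ j, φ k (u j)‖ :=
            norm_tsum_le_tsum_norm (summable_diag_norm φ hN hsum u)
        _ ≤ ∑' k, (N : ℝ)⁻¹ * ∑ j, ‖φ k (u j)‖ ^ N :=
            Summable.tsum_le_tsum (prod_norm_bound φ hN u) (summable_diag_norm φ hN hsum u)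
              ((summable_sum fun j _ => hsum (u j)).mul_left _)
        _ = (N : ℝ)⁻¹ * ∑ j, ∑' k, ‖φ k (u j)‖ ^ N := by
            rw [tsum_mul_left, Summable.tsum_finsetSum fun j _ => hsum (u j)]
        _ ≤ (N : ℝ)⁻¹ * ∑ j : Fin N, (1 : ℝ) := by
            refine mul_le_mul_of_nonneg_left (Finset.sum_le_sum fun j _ => ?_)
              (inv_nonneg.2 (Nat.cast_nonneg N))
            exact le_trans (hle (u j)) (pow_le_one₀ (norm_nonneg _) (hu j))
        _ = 1 := by
            simp only [Finset.sum_const, Finset.card_univ, Fintype.card_fin, nsmul_eq_mul,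
              mul_one]
            exact inv_mul_cancel₀ hN0
    set u : Fin N → X := fun j => (‖y j‖ : ℂ)⁻¹ • y j with hu_def
    have hcne : ∀ j, (‖y j‖ : ℂ) ≠ 0 := fun j =>
      Complex.ofReal_ne_zero.2 (norm_ne_zero_iff.2 (hz j))
    have hu1 : ∀ j, ‖u j‖ ≤ 1 := by
      intro j
      rw [hu_def]
      simp only [norm_smul, norm_inv, Complex.norm_real, Real.norm_eq_abs,
        abs_of_nonneg (norm_nonneg (y j))]
      rw [inv_mul_cancel₀ (norm_ne_zero_iff.2 (hz j))]
    have hyu : ∀ j, y j = (‖y j‖ : ℂ) • u j := fun j =>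
      (smul_inv_smul₀ (hcne j) (y j)).symm
    have hkey : ∀ k, ∏ j, φ k (y j) = (∏ j, (‖y j‖ : ℂ)) * ∏ j, φ k (u j) := by
      intro k
      rw [← Finset.prod_mul_distrib]
      refine Finset.prod_congr rfl fun j _ => ?_
      conv_lhs => rw [hyu j]
      rw [map_smul, smul_eq_mul]
    calc ‖∑' k, ∏ j, φ k (y j)‖
        = ‖(∏ j, (‖y j‖ : ℂ)) * ∑' k, ∏ j, φ k (u j)‖ := by
          rw [← tsum_mul_left]
          exact congrArg _ (tsum_congr hkey)
      _ = (∏ j, ‖y j‖) * ‖∑' k, ∏ j, φ k (u j)‖ := by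
          rw [norm_mul, norm_prod]
          congr 1
          exact Finset.prod_congr rfl fun j _ => by
            rw [Complex.norm_real, Real.norm_eq_abs, abs_of_nonneg (norm_nonneg _)]
      _ ≤ (∏ j, ‖y j‖) * 1 :=
          mul_le_mul_of_nonneg_left (hnorm1 u hu1)
            (Finset.prod_nonneg fun j _ => norm_nonneg _)
      _ = ∏ j, ‖y j‖ := mul_one _
  · push_neg at hz
    obtain ⟨j0, hj0⟩ := hz
    have hzero : ∀ k, ∏ j, φ k (y j) = 0 := fun k =>
      Finset.prod_eq_zero (Finset.mem_univ j0) (by rw [hj0, map_zero])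
    rw [tsum_congr hzero, tsum_zero, norm_zero]
    exact Finset.prod_nonneg fun j _ => norm_nonneg _

/-- The continuous diagonal multilinear map. -/
noncomputable def diagCML (hN : 1 ≤ N)
    (hsum : ∀ y : X, Summable fun k => ‖φ k y‖ ^ N)
    (hle : ∀ y : X, ∑' k, ‖φ k y‖ ^ N ≤ ‖y‖ ^ N) :
    ContinuousMultilinearMap ℂ (fun _ : Fin N => X) ℂ :=
  (diagML φ hN hsum).mkContinuous 1 fun y => by
    simpa [diagML_apply] using diagML_bound φ hN hsum hle y

theorem diagCML_apply (hN : 1 ≤ N) (hsum : ∀ y : X, Summable fun k => ‖φ k y‖ ^ N)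
    (hle : ∀ y : X, ∑' k, ‖φ k y‖ ^ N ≤ ‖y‖ ^ N) (y : Fin N → X) :
    diagCML φ hN hsum hle y = ∑' k, ∏ j, φ k (y j) := rfl

end Diag


section Restr

variable {p : ℝ} [Fact (1 ≤ ENNReal.ofReal p)]

/-- Restriction of an `ℓᵖ` element to a finite set of coordinates. -/
noncomputable def restr (hp : 1 ≤ p) (F : Finset ℕ)
    (y : lp (fun _ : ℕ => ℂ) (ENNReal.ofReal p)) :
    lp (fun _ : ℕ => ℂ) (ENNReal.ofReal p) :=
  ⟨fun i => if i ∈ F then y i else 0, by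
    have hqt : (ENNReal.ofReal p).toReal = p := ENNReal.toReal_ofReal (by linarith)
    have hqt0 : 0 < (ENNReal.ofReal p).toReal := by rw [hqt]; linarith
    apply memℓp_gen
    refine Summable.of_nonneg_of_le (fun i => Real.rpow_nonneg (norm_nonneg _) _)
      (fun i => ?_) ((lp.memℓp y).summable hqt0)
    by_cases h : i ∈ F
    · simp [h]
    · simp only [h, if_false, norm_zero]
      rw [Real.zero_rpow hqt0.ne']
      exact Real.rpow_nonneg (norm_nonneg _) _⟩

theorem restr_apply (hp : 1 ≤ p) (F : Finset ℕ)
    (y : lp (fun _ : ℕ => ℂ) (ENNReal.ofReal p)) (i : ℕ) :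
    restr hp F y i = if i ∈ F then y i else 0 := rfl

theorem restr_add (hp : 1 ≤ p) (F : Finset ℕ)
    (y z : lp (fun _ : ℕ => ℂ) (ENNReal.ofReal p)) :
    restr hp F (y + z) = restr hp F y + restr hp F z := by
  ext i
  simp only [lp.coeFn_add, Pi.add_apply, restr_apply]
  split_ifs <;> simp

theorem restr_smul (hp : 1 ≤ p) (F : Finset ℕ) (c : ℂ)
    (y : lp (fun _ : ℕ => ℂ) (ENNReal.ofReal p)) :
    restr hp F (c • y) = c • restr hp F y := by
  ext i
  simp only [lp.coeFn_smul, Pi.smul_apply, restr_apply, smul_eq_mul]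
  split_ifs <;> simp

theorem norm_restr_pow (hp : 1 ≤ p) (F : Finset ℕ)
    (y : lp (fun _ : ℕ => ℂ) (ENNReal.ofReal p)) :
    ‖restr hp F y‖ ^ p = ∑ i ∈ F, ‖y i‖ ^ p := by
  have hqt : (ENNReal.ofReal p).toReal = p := ENNReal.toReal_ofReal (by linarith)
  have hqt0 : 0 < (ENNReal.ofReal p).toReal := by rw [hqt]; linarith
  have hppos : 0 < p := by linarith
  have h1 := lp.hasSum_norm hqt0 (restr hp F y)
  rw [hqt] at h1
  have h2 : HasSum (fun i => ‖restr hp F y i‖ ^ p) (∑ i ∈ F, ‖y i‖ ^ p) := by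
    have h3 : HasSum (fun i => ‖restr hp F y i‖ ^ p) (∑ i ∈ F, ‖restr hp F y i‖ ^ p) := by
      apply hasSum_sum_of_ne_finset_zero
      intro i hi
      rw [restr_apply, if_neg hi, norm_zero, Real.zero_rpow hppos.ne']
    have h4 : ∑ i ∈ F, ‖restr hp F y i‖ ^ p = ∑ i ∈ F, ‖y i‖ ^ p :=
      Finset.sum_congr rfl fun i hi => by rw [restr_apply, if_pos hi]
    rwa [h4] at h3
  exact h1.unique h2

theorem sum_rpow_le_norm (hp : 1 ≤ p) (F : Finset ℕ)
    (y : lp (fun _ : ℕ => ℂ) (ENNReal.ofReal p)) :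
    ∑ i ∈ F, ‖y i‖ ^ p ≤ ‖y‖ ^ p := by
  have hqt : (ENNReal.ofReal p).toReal = p := ENNReal.toReal_ofReal (by linarith)
  have hqt0 : 0 < (ENNReal.ofReal p).toReal := by rw [hqt]; linarith
  have := lp.sum_rpow_le_norm_rpow hqt0 y F
  rwa [hqt] at this

end Restr

end LpPNS

open LpPNS in
/-- For `1 ≤ p < ∞` and any integer `N ≥ p`, the space `ℓ_p` is `P_N`-Schur: any sequence
that converges to `0` against every homogeneous polynomial of degree at most `N` is norm
null. -/
theorem lp_PNSchur (p : ℝ) (hp : 1 ≤ p) [Fact (1 ≤ ENNReal.ofReal p)] (N : ℕ) (hN : p ≤ N) :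
    ∀ x : ℕ → lp (fun _ : ℕ => ℂ) (ENNReal.ofReal p),
      (∀ M : ℕ, 1 ≤ M → M ≤ N →
        ∀ A : ContinuousMultilinearMap ℂ
            (fun _ : Fin M => lp (fun _ : ℕ => ℂ) (ENNReal.ofReal p)) ℂ,
          Tendsto (fun n => A (fun _ => x n)) atTop (𝓝 0)) →
      Tendsto (fun n => ‖x n‖) atTop (𝓝 0) := by
  intro x hx
  by_contra hcon
  have hp0 : 0 ≤ p := by linarith
  have hppos : 0 < p := by linarith
  have hqt : (ENNReal.ofReal p).toReal = p := ENNReal.toReal_ofReal hp0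
  have hqt0 : 0 < (ENNReal.ofReal p).toReal := by rw [hqt]; linarith
  have hq0 : (ENNReal.ofReal p) ≠ 0 := by
    intro h
    rw [h] at hqt0
    simp at hqt0
  have hNR : (1 : ℝ) ≤ (N : ℝ) := le_trans hp hN
  have hN1 : 1 ≤ N := by exact_mod_cast hNR
  -- a subsequence bounded below in norm
  obtain ⟨ε, hε, hfreq⟩ : ∃ ε > 0, ∀ K : ℕ, ∃ n ≥ K, ε ≤ ‖x n‖ := by
    by_contra h
    push_neg at h
    apply hcon
    rw [Metric.tendsto_atTop]
    intro ε' hε'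
    obtain ⟨K, hK⟩ := h ε' hε'
    refine ⟨K, fun n hn => ?_⟩
    rw [Real.dist_eq, sub_zero, abs_of_nonneg (norm_nonneg _)]
    exact hK n hn
  -- coordinates tend to zero
  have hcoord : ∀ i : ℕ, Tendsto (fun n => ‖x n i‖) atTop (𝓝 0) := by
    intro i
    let coordL : lp (fun _ : ℕ => ℂ) (ENNReal.ofReal p) →L[ℂ] ℂ :=
      LinearMap.mkContinuous
        { toFun := fun y => y i
          map_add' := fun y z => by simp [lp.coeFn_add]
          map_smul' := fun c y => by simp [lp.coeFn_smul] }
        1 (fun y => by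
            rw [one_mul]
            exact lp.norm_apply_le_norm hq0 y i)
    have h1 := hx 1 le_rfl hN1
      (ContinuousMultilinearMap.ofSubsingleton ℂ _ ℂ (0 : Fin 1) coordL)
    have h2 : Tendsto (fun n : ℕ => x n i) atTop (𝓝 0) := by
      simp [ContinuousMultilinearMap.ofSubsingleton_apply_apply] at h1
      exact h1
    simpa using h2.norm
  have hcoordsum : ∀ b : ℕ,
      Tendsto (fun n => ∑ i ∈ Finset.range b, ‖x n i‖ ^ p) atTop (𝓝 0) := by
    intro b
    have h1 := tendsto_finset_sum (Finset.range b)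
      (fun i _ => ((hcoord i).rpow_const (Or.inr hp0)))
    simpa [Real.zero_rpow hppos.ne'] using h1
  -- small parameter
  set P : ℝ := ε ^ p with hPdef
  have hPpos : 0 < P := Real.rpow_pos_of_pos hε _
  set τ : ℝ := P / 8 with hτdef
  have hτ : 0 < τ := by positivity
  -- gliding hump construction
  have step : ∀ ab : ℕ × ℕ, ∃ ab' : ℕ × ℕ, ab.1 < ab'.1 ∧ ab.2 < ab'.2 ∧ ε ≤ ‖x ab'.1‖ ∧
      ‖x ab.1‖ ^ p - ∑ i ∈ Finset.range ab'.2, ‖x ab.1 i‖ ^ p < τ ∧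
      ∑ i ∈ Finset.range ab'.2, ‖x ab'.1 i‖ ^ p < τ := by
    rintro ⟨a, b⟩
    have hsum := (lp.hasSum_norm hqt0 (x a)).tendsto_sum_nat
    rw [hqt] at hsum
    have hev : ∀ᶠ K in atTop, ‖x a‖ ^ p - ∑ i ∈ Finset.range K, ‖x a i‖ ^ p < τ := by
      have h2 := hsum.eventually
        (eventually_gt_nhds (show ‖x a‖ ^ p - τ < ‖x a‖ ^ p by linarith))
      filter_upwards [h2] with K hK
      linarith
    obtain ⟨b', hb'1, hb'2⟩ := (hev.and (eventually_ge_atTop (b + 1))).exists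
    have h3 := (hcoordsum b').eventually (eventually_lt_nhds hτ)
    obtain ⟨K, hK⟩ := eventually_atTop.1 h3
    obtain ⟨a', ha'1, ha'2⟩ := hfreq (max K (a + 1))
    refine ⟨(a', b'), ?_, ?_, ha'2, hb'1, ?_⟩
    · exact lt_of_lt_of_le (Nat.lt_succ_self a) (le_trans (le_max_right _ _) ha'1)
    · exact lt_of_lt_of_le (Nat.lt_succ_self b) hb'2
    · exact hK a' (le_trans (le_max_left _ _) ha'1)
  obtain ⟨nn0, _, hn0'⟩ := hfreq 0
  obtain ⟨g, hg0, hg⟩ : ∃ g : ℕ → ℕ × ℕ, g 0 = (nn0, 0) ∧ ∀ k,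
      (g k).1 < (g (k + 1)).1 ∧ (g k).2 < (g (k + 1)).2 ∧ ε ≤ ‖x (g (k + 1)).1‖ ∧
      ‖x (g k).1‖ ^ p - ∑ i ∈ Finset.range (g (k + 1)).2, ‖x (g k).1 i‖ ^ p < τ ∧
      ∑ i ∈ Finset.range (g (k + 1)).2, ‖x (g (k + 1)).1 i‖ ^ p < τ :=
    ⟨fun k => Nat.rec (nn0, 0) (fun _ q => Classical.choose (step q)) k, rfl,
      fun k => Classical.choose_spec (step _)⟩
  set n : ℕ → ℕ := fun k => (g k).1 with hn_def
  set m : ℕ → ℕ := fun k => (g k).2 with hm_def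
  have hmono_n : StrictMono n := strictMono_nat_of_lt_succ fun k => (hg k).1
  have hmono_m : StrictMono m := strictMono_nat_of_lt_succ fun k => (hg k).2.1
  have hxn : ∀ k, ε ≤ ‖x (n k)‖ := by
    intro k
    cases k with
    | zero =>
        have h0 : n 0 = nn0 := by simp [hn_def, hg0]
        rw [h0]; exact hn0'
    | succ k => exact (hg k).2.2.1
  have hiv : ∀ k, ∑ i ∈ Finset.range (m k), ‖x (n k) i‖ ^ p < τ := by
    intro k
    cases k with
    | zero =>
        have h0 : m 0 = 0 := by simp [hm_def, hg0]
        rw [h0]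
        simpa using hτ
    | succ k => exact (hg k).2.2.2.2
  have hv : ∀ k, ‖x (n k)‖ ^ p - ∑ i ∈ Finset.range (m (k + 1)), ‖x (n k) i‖ ^ p < τ :=
    fun k => (hg k).2.2.2.1
  -- blocks, dual functionals
  set B : ℕ → Finset ℕ := fun k => Finset.Ico (m k) (m (k + 1)) with hB_def
  set v : ℕ → lp (fun _ : ℕ => ℂ) (ENNReal.ofReal p) :=
    fun k => restr hp (B k) (x (n k)) with hv_def
  have hdual : ∀ w : lp (fun _ : ℕ => ℂ) (ENNReal.ofReal p),
      ∃ gg : lp (fun _ : ℕ => ℂ) (ENNReal.ofReal p) →L[ℂ] ℂ,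
        ‖gg‖ ≤ 1 ∧ gg w = (‖w‖ : ℂ) := by
    intro w
    by_cases h : w = 0
    · exact ⟨0, by simp, by simp [h]⟩
    · obtain ⟨gg, h1, h2⟩ := exists_dual_vector ℂ w (norm_ne_zero_iff.2 h)
      exact ⟨gg, le_of_eq h1, h2⟩
  choose G hG1 hG2 using fun k => hdual (v k)
  -- the functionals φ
  set φ : ℕ → lp (fun _ : ℕ => ℂ) (ENNReal.ofReal p) →ₗ[ℂ] ℂ := fun k =>
    { toFun := fun y => G k (restr hp (B k) y)
      map_add' := fun y z => by
        show G k (restr hp (B k) (y + z)) = G k (restr hp (B k) y) + G k (restr hp (B k) z)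
        rw [restr_add, map_add]
      map_smul' := fun c y => by
        show G k (restr hp (B k) (c • y)) = (RingHom.id ℂ) c • G k (restr hp (B k) y)
        rw [restr_smul, map_smul]
        rfl } with hφ_def
  have hφval : ∀ k (y : lp (fun _ : ℕ => ℂ) (ENNReal.ofReal p)),
      φ k y = G k (restr hp (B k) y) := fun k y => rfl
  have hφle : ∀ k (y : lp (fun _ : ℕ => ℂ) (ENNReal.ofReal p)),
      ‖φ k y‖ ≤ ‖restr hp (B k) y‖ := by
    intro k y
    rw [hφval]
    calc ‖G k (restr hp (B k) y)‖ ≤ ‖G k‖ * ‖restr hp (B k) y‖ := (G k).le_opNorm _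
      _ ≤ 1 * ‖restr hp (B k) y‖ :=
          mul_le_mul_of_nonneg_right (hG1 k) (norm_nonneg _)
      _ = ‖restr hp (B k) y‖ := one_mul _
  -- partial sums of block norms
  have hblock : ∀ (y : lp (fun _ : ℕ => ℂ) (ENNReal.ofReal p)) (a b : ℕ), a ≤ b →
      ∑ ℓ ∈ Finset.Ico a b, ‖restr hp (B ℓ) y‖ ^ p
        = ∑ i ∈ Finset.Ico (m a) (m b), ‖y i‖ ^ p := by
    intro y a b hab
    have h1 : ∀ ℓ, ‖restr hp (B ℓ) y‖ ^ p = ∑ i ∈ Finset.Ico (m ℓ) (m (ℓ + 1)), ‖y i‖ ^ p :=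
      fun ℓ => norm_restr_pow hp (B ℓ) y
    rw [Finset.sum_congr rfl fun ℓ _ => h1 ℓ]
    exact sum_blocks m hmono_m.monotone _ a b hab
  have hpartial : ∀ (y : lp (fun _ : ℕ => ℂ) (ENNReal.ofReal p)) (K : ℕ),
      ∑ ℓ ∈ Finset.range K, ‖restr hp (B ℓ) y‖ ^ p ≤ ‖y‖ ^ p := by
    intro y K
    rw [Finset.range_eq_Ico, hblock y 0 K (Nat.zero_le K)]
    exact sum_rpow_le_norm hp _ y
  -- exponent
  set r : ℝ := (N : ℝ) / p with hr_def
  have hr1 : 1 ≤ r := by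
    rw [hr_def, le_div_iff₀ hppos, one_mul]
    exact hN
  have hr0 : 0 < r := lt_of_lt_of_le one_pos hr1
  have hrpow : ∀ t : ℝ, 0 ≤ t → (t ^ p) ^ r = t ^ N := by
    intro t ht
    rw [hr_def, ← Real.rpow_natCast t N, ← Real.rpow_mul ht]
    congr 1
    field_simp
  -- summability package for φ
  have hsumN : ∀ y : lp (fun _ : ℕ => ℂ) (ENNReal.ofReal p),
      Summable (fun k => ‖φ k y‖ ^ N) ∧ ∑' k, ‖φ k y‖ ^ N ≤ ‖y‖ ^ N := by
    intro y
    obtain ⟨hs, hle⟩ := tsum_rpow_le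
      (f := fun k => ‖restr hp (B k) y‖ ^ p)
      (fun k => Real.rpow_nonneg (norm_nonneg _) _) (hpartial y) hr1
    have hs' : Summable (fun k => ‖restr hp (B k) y‖ ^ N) :=
      hs.congr fun k => hrpow _ (norm_nonneg _)
    have hcomp : ∀ k, ‖φ k y‖ ^ N ≤ ‖restr hp (B k) y‖ ^ N :=
      fun k => pow_le_pow_left₀ (norm_nonneg _) (hφle k y) N
    have hsφ : Summable (fun k => ‖φ k y‖ ^ N) :=
      Summable.of_nonneg_of_le (fun k => pow_nonneg (norm_nonneg _) N) hcomp hs'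
    refine ⟨hsφ, ?_⟩
    calc ∑' k, ‖φ k y‖ ^ N ≤ ∑' k, ‖restr hp (B k) y‖ ^ N := Summable.tsum_le_tsum hcomp hsφ hs'
      _ = ∑' k, (‖restr hp (B k) y‖ ^ p) ^ r :=
          tsum_congr fun k => (hrpow _ (norm_nonneg _)).symm
      _ ≤ (‖y‖ ^ p) ^ r := hle
      _ = ‖y‖ ^ N := hrpow _ (norm_nonneg _)
  -- the polynomial
  set A := diagCML φ hN1 (fun y => (hsumN y).1) (fun y => (hsumN y).2) with hA_def
  have hA := hx N hN1 le_rfl A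
  have hA2 : Tendsto (fun k => A (fun _ => x (n k))) atTop (𝓝 0) :=
    hA.comp hmono_n.tendsto_atTop
  -- the contradiction constant
  set c : ℝ := (3 / 4 * P) ^ r - (P / 4) ^ r with hc_def
  have hc : 0 < c := by
    rw [hc_def, sub_pos]
    exact Real.rpow_lt_rpow (by positivity) (by linarith) hr0
  -- lower bound for every k
  have hlower : ∀ k, c ≤ ‖A (fun _ => x (n k))‖ := by
    intro k
    set y := x (n k) with hy_def
    have hAval : A (fun _ => y) = ∑' ℓ, (φ ℓ y) ^ N := by
      rw [hA_def, diagCML_apply]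
      exact tsum_congr fun ℓ => by
        rw [Finset.prod_const, Finset.card_univ, Fintype.card_fin]
    -- size of the main block
    have hbk : 3 / 4 * P ≤ ‖v k‖ ^ p := by
      have h1 : ‖v k‖ ^ p = ∑ i ∈ B k, ‖y i‖ ^ p := norm_restr_pow hp (B k) y
      have h2 : ∑ i ∈ Finset.range (m k), ‖y i‖ ^ p + ∑ i ∈ B k, ‖y i‖ ^ p
          = ∑ i ∈ Finset.range (m (k + 1)), ‖y i‖ ^ p := by
        have hBk : B k = Finset.Ico (m k) (m (k + 1)) := rfl
        rw [Finset.range_eq_Ico, Finset.range_eq_Ico, hBk]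
        exact Finset.sum_Ico_consecutive _ (Nat.zero_le _)
          (le_of_lt (hmono_m (Nat.lt_succ_self k)))
      have h3 : P ≤ ‖y‖ ^ p := Real.rpow_le_rpow (le_of_lt hε) (hxn k) hp0
      have h4 := hiv k
      have h5 := hv k
      rw [h1]
      have hτP : τ = P / 8 := rfl
      linarith
    have hφky : φ k y = (‖v k‖ : ℂ) := hG2 k
    have hterm : (3 / 4 * P) ^ r ≤ ‖φ k y‖ ^ N := by
      rw [hφky]
      have h6 : ‖((‖v k‖ : ℝ) : ℂ)‖ = ‖v k‖ := by
        rw [Complex.norm_real, Real.norm_eq_abs, abs_of_nonneg (norm_nonneg _)]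
      rw [h6, ← hrpow _ (norm_nonneg (v k))]
      exact Real.rpow_le_rpow (by positivity) hbk (le_of_lt hr0)
    -- the error terms
    set w : ℕ → ℝ := fun ℓ => if ℓ = k then 0 else ‖restr hp (B ℓ) y‖ ^ p with hw_def
    have hw0 : ∀ ℓ, 0 ≤ w ℓ := by
      intro ℓ
      simp only [hw_def]
      split_ifs
      · exact le_refl 0
      · exact Real.rpow_nonneg (norm_nonneg _) _
    have hwpart : ∀ K, ∑ ℓ ∈ Finset.range K, w ℓ ≤ P / 4 := by
      intro K
      have hτP4 : τ + τ ≤ P / 4 := by rw [hτdef]; linarith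
      by_cases hKk : K ≤ k
      · have h1 : ∑ ℓ ∈ Finset.range K, w ℓ = ∑ ℓ ∈ Finset.Ico 0 K, ‖restr hp (B ℓ) y‖ ^ p := by
          rw [Finset.range_eq_Ico]
          refine Finset.sum_congr rfl fun ℓ hℓ => ?_
          simp only [hw_def]
          have : ℓ ≠ k := by
            have := (Finset.mem_Ico.1 hℓ).2
            omega
          rw [if_neg this]
        rw [h1, hblock y 0 K (Nat.zero_le K)]
        have h2 : ∑ i ∈ Finset.Ico (m 0) (m K), ‖y i‖ ^ p
            ≤ ∑ i ∈ Finset.range (m k), ‖y i‖ ^ p := by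
          apply Finset.sum_le_sum_of_subset_of_nonneg
          · intro i hi
            rw [Finset.mem_range]
            have := (Finset.mem_Ico.1 hi).2
            have := hmono_m.monotone hKk
            omega
          · intro i _ _
            exact Real.rpow_nonneg (norm_nonneg _) _
        have := hiv k
        rw [← hy_def] at this
        linarith
      · push_neg at hKk
        have hsplit : ∑ ℓ ∈ Finset.range K, w ℓ
            = ∑ ℓ ∈ Finset.Ico 0 k, w ℓ + (w k + ∑ ℓ ∈ Finset.Ico (k + 1) K, w ℓ) := by
          rw [Finset.range_eq_Ico,
            ← Finset.sum_Ico_consecutive _ (Nat.zero_le k) (le_of_lt hKk),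
            Finset.sum_eq_sum_Ico_succ_bot hKk]
        have hwk : w k = 0 := by simp only [hw_def]; simp
        have h1 : ∑ ℓ ∈ Finset.Ico 0 k, w ℓ = ∑ i ∈ Finset.Ico (m 0) (m k), ‖y i‖ ^ p := by
          rw [Finset.sum_congr rfl fun ℓ hℓ => ?_, hblock y 0 k (Nat.zero_le k)]
          simp only [hw_def]
          have : ℓ ≠ k := by
            have := (Finset.mem_Ico.1 hℓ).2
            omega
          rw [if_neg this]
        have h2 : ∑ ℓ ∈ Finset.Ico (k + 1) K, w ℓ
            = ∑ i ∈ Finset.Ico (m (k + 1)) (m K), ‖y i‖ ^ p := by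
          rw [Finset.sum_congr rfl fun ℓ hℓ => ?_, hblock y (k + 1) K hKk]
          simp only [hw_def]
          have : ℓ ≠ k := by
            have := (Finset.mem_Ico.1 hℓ).1
            omega
          rw [if_neg this]
        have h3 : ∑ i ∈ Finset.Ico (m 0) (m k), ‖y i‖ ^ p
            ≤ ∑ i ∈ Finset.range (m k), ‖y i‖ ^ p := by
          apply Finset.sum_le_sum_of_subset_of_nonneg
          · intro i hi
            rw [Finset.mem_range]
            exact (Finset.mem_Ico.1 hi).2
          · intro i _ _
            exact Real.rpow_nonneg (norm_nonneg _) _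
        have h4 : ∑ i ∈ Finset.range (m (k + 1)), ‖y i‖ ^ p
            + ∑ i ∈ Finset.Ico (m (k + 1)) (m K), ‖y i‖ ^ p
            = ∑ i ∈ Finset.range (m K), ‖y i‖ ^ p := by
          rw [Finset.range_eq_Ico, Finset.range_eq_Ico]
          exact Finset.sum_Ico_consecutive _ (Nat.zero_le _)
            (hmono_m.monotone hKk)
        have h5 : ∑ i ∈ Finset.range (m K), ‖y i‖ ^ p ≤ ‖y‖ ^ p := by
          rw [Finset.range_eq_Ico]
          exact sum_rpow_le_norm hp _ y
        have h6 := hiv k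
        rw [← hy_def] at h6
        have h7 := hv k
        rw [← hy_def] at h7
        rw [hsplit, hwk, h1, h2]
        linarith
    obtain ⟨hws, hwle⟩ := tsum_rpow_le hw0 hwpart hr1
    -- error bound
    have herr_term : ∀ ℓ, ‖(if ℓ = k then 0 else (φ ℓ y) ^ N : ℂ)‖ ≤ w ℓ ^ r := by
      intro ℓ
      simp only [hw_def]
      by_cases h : ℓ = k
      · simp [h, Real.zero_rpow hr0.ne']
      · rw [if_neg h, if_neg h, norm_pow, hrpow _ (norm_nonneg _)]
        exact pow_le_pow_left₀ (norm_nonneg _) (hφle ℓ y) N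
    have herr_sum : Summable (fun ℓ => ‖(if ℓ = k then 0 else (φ ℓ y) ^ N : ℂ)‖) :=
      Summable.of_nonneg_of_le (fun ℓ => norm_nonneg _) herr_term hws
    have herr : ‖∑' ℓ, (if ℓ = k then 0 else (φ ℓ y) ^ N : ℂ)‖ ≤ (P / 4) ^ r := by
      calc ‖∑' ℓ, (if ℓ = k then 0 else (φ ℓ y) ^ N : ℂ)‖
          ≤ ∑' ℓ, ‖(if ℓ = k then 0 else (φ ℓ y) ^ N : ℂ)‖ :=
            norm_tsum_le_tsum_norm herr_sum
        _ ≤ ∑' ℓ, w ℓ ^ r := Summable.tsum_le_tsum herr_term herr_sum hws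
        _ ≤ (P / 4) ^ r := hwle
    -- summability of the ℂ-valued series
    have hsumC : Summable (fun ℓ => (φ ℓ y) ^ N) := by
      apply Summable.of_norm
      have := (hsumN y).1
      refine this.congr fun ℓ => ?_
      rw [norm_pow]
    have hsplit2 := Summable.tsum_eq_add_tsum_ite hsumC k
    rw [hAval, hsplit2]
    have htri : ‖(φ k y) ^ N‖ - ‖∑' ℓ, (if ℓ = k then 0 else (φ ℓ y) ^ N : ℂ)‖
        ≤ ‖(φ k y) ^ N + ∑' ℓ, (if ℓ = k then 0 else (φ ℓ y) ^ N : ℂ)‖ := by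
      have h8 := norm_sub_norm_le ((φ k y) ^ N)
        (-(∑' ℓ, (if ℓ = k then 0 else (φ ℓ y) ^ N : ℂ)))
      rw [norm_neg, sub_neg_eq_add] at h8
      exact h8
    rw [norm_pow] at htri
    have := hterm
    rw [hc_def]
    linarith
  -- derive the contradiction
  obtain ⟨k, hk⟩ :=
    ((NormedAddCommGroup.tendsto_nhds_zero.1 hA2) c hc).exists
  exact absurd (hlower k) (not_le.2 hk)
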